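/- Let {a_k} be a decreasing sequence of real numbers and {b_k} a sequence of positive reals such that a_k ≤ a_{k-1}(1 - b_k · a_{k-1}) for k = 1, ..., K. Then a_K ≤ 1 / (∑_{k=1}^K b_k). -/
import Mathlib


/-- Recursive inequality (Lemma on recursions): if `a` is decreasing along `1..K`,
`b k > 0`, and `a k ≤ a (k-1) * (1 - b k * a (k-1))` for `k = 1, ..., K`, then
`a K ≤ 1 / ∑_{k=1}^K b k`. -/
theorem recursive_inequality (a b : ℕ → ℝ) (K : ℕ) (hK : 1 ≤ K)
    (hb : ∀ k, 0 < b k)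
    (hdec : ∀ k, 1 ≤ k → k ≤ K → a k ≤ a (k - 1))
    (hrec : ∀ k, 1 ≤ k → k ≤ K → a k ≤ a (k - 1) * (1 - b k * a (k - 1))) :
    a K ≤ 1 / ∑ k ∈ Finset.Icc 1 K, b k := by
  have hSpos : 0 < ∑ k ∈ Finset.Icc 1 K, b k := by
    apply Finset.sum_pos (fun k _ => hb k)
    exact ⟨1, Finset.mem_Icc.mpr ⟨le_refl 1, hK⟩⟩
  rcases le_or_gt (a K) 0 with h | haK
  · exact h.trans (le_of_lt (by positivity))
  -- a n ≤ a m for m ≤ n ≤ K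
  have hmono : ∀ n, n ≤ K → ∀ m, m ≤ n → a n ≤ a m := by
    intro n
    induction n with
    | zero => intro _ m hm; interval_cases m; exact le_refl _
    | succ p ih =>
      intro hn m hm
      rcases Nat.eq_or_lt_of_le hm with h | h
      · rw [h]
      · have h1 : a (p + 1) ≤ a p := by
          have := hdec (p + 1) (by omega) hn
          simpa using this
        exact h1.trans (ih (by omega) m (by omega))
  have hpos : ∀ n, n ≤ K → 0 < a n := fun n hn => lt_of_lt_of_le haK (hmono K le_rfl n hn)
  -- key: sum ≤ 1 / a n
  have key : ∀ n, n ≤ K → (∑ k ∈ Finset.Icc 1 n, b k) ≤ 1 / a n := by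
    intro n
    induction n with
    | zero => intro _; have := hpos 0 (by omega); simp; positivity
    | succ p ih =>
      intro hn
      have hp := ih (by omega)
      have hr := hrec (p + 1) (by omega) hn
      simp only [Nat.add_sub_cancel] at hr
      have hap : 0 < a p := hpos p (by omega)
      have hap1 : 0 < a (p + 1) := hpos (p + 1) hn
      have hbp := hb (p + 1)
      have hstep : 1 / a p + b (p + 1) ≤ 1 / a (p + 1) := by
        rw [div_add' _ _ _ (ne_of_gt hap), div_le_div_iff₀ hap hap1]
        nlinarith [mul_pos hap hap1, sq_nonneg (a p - a (p+1))]
      rw [Finset.sum_Icc_succ_top (by omega)]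
      linarith
  have hfin := key K le_rfl
  rw [le_div_iff₀ hSpos]
  rw [le_div_iff₀ haK] at hfin
  linarith
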